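/- Let (V, g, J) be a Hermitian vector space and W a finite-dimensional complex inner product space. If Φ ∈ Λ^{1,0}V* ⊗ Hom(W₀, W₁) is a (1,0)-form with values in linear maps between Hermitian spaces, then the End(W₀)-valued 2-form -i Φ* ∧ Φ is nonnegative; i.e., for every nonzero w ∈ W₀, the scalar 2-form X,Y ↦ ⟨(-iΦ*∧Φ)(X,Y)w, w⟩ is a nonnegative (1,1)-form, where (α∧β)(X,Y) = α(X)β(Y) - α(Y)β(X) and Φ*(X) = (Φ(X))*. -/

import Mathlib

open scoped RealInnerProductSpace

/-- if `Φ` is a `(1,0)`-form on a Hermitian vector space `(V,g,J)` with values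
in `Hom(W₀,W₁)` (Hermitian spaces), then the `End(W₀)`-valued 2-form `-iΦ*∧Φ` is
nonnegative: for every nonzero `w ∈ W₀`, the scalar 2-form
`η(X,Y) = ⟨(-iΦ*∧Φ)(X,Y) w, w⟩` is of type (1,1) and satisfies `(1/i)η(X',X'') ≥ 0`, where
`X' = (X - iJX)/2`, `X'' = (X + iJX)/2` and `η` is extended complex-bilinearly. -/
theorem second_fundamental_form_wedge_nonneg {V : Type*} [NormedAddCommGroup V]
    [InnerProductSpace ℝ V]
    (J : V →ₗ[ℝ] V) (hJ2 : ∀ x, J (J x) = -x) (hJo : ∀ x y, ⟪J x, J y⟫ = ⟪x, y⟫)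
    {W₀ W₁ : Type*} [NormedAddCommGroup W₀] [InnerProductSpace ℂ W₀] [FiniteDimensional ℂ W₀]
    [NormedAddCommGroup W₁] [InnerProductSpace ℂ W₁] [FiniteDimensional ℂ W₁]
    (Φ : V →ₗ[ℝ] (W₀ →L[ℂ] W₁)) (hΦ : ∀ x, Φ (J x) = Complex.I • Φ x)
    (w : W₀) (hw : w ≠ 0) (η : V → V → ℂ)
    (hη : ∀ X Y, η X Y = -Complex.I *
      (inner ℂ w ((((Φ X).adjoint.comp (Φ Y) - (Φ Y).adjoint.comp (Φ X))) w) : ℂ)) :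
    (∀ X Y, η (J X) (J Y) = η X Y)
    ∧ ∀ X : V,
        0 ≤ ((Complex.I)⁻¹ * ((1 / 4 : ℂ) * (η X X + Complex.I * η X (J X)
            - Complex.I * η (J X) X + η (J X) (J X)))).re
        ∧ ((Complex.I)⁻¹ * ((1 / 4 : ℂ) * (η X X + Complex.I * η X (J X)
            - Complex.I * η (J X) X + η (J X) (J X)))).im = 0 := by
  have key : ∀ X Y, η X Y = -Complex.I *
      ((inner ℂ (Φ X w) (Φ Y w) : ℂ) - (inner ℂ (Φ Y w) (Φ X w) : ℂ)) := by
    intro X Y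
    rw [hη X Y]
    congr 1
    simp [ContinuousLinearMap.adjoint_inner_right, inner_sub_right]
  constructor
  · intro X Y
    rw [key, key, hΦ, hΦ]
    simp [inner_smul_left, inner_smul_right, Complex.conj_I, Complex.I_sq]
    ring_nf
    rw [Complex.I_sq]
    ring
  · intro X
    have h1 : η X X = 0 := by rw [key]; ring
    have h4 : η (J X) (J X) = 0 := by rw [key]; ring
    set r : ℂ := (inner ℂ (Φ X w) (Φ X w) : ℂ) with hr
    have h2 : η X (J X) = 2 * r := by
      rw [key, hΦ]
      simp [inner_smul_left, inner_smul_right, Complex.conj_I, Complex.I_sq, hr]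
      ring_nf
      rw [Complex.I_sq]
      ring
    have h3 : η (J X) X = -(2 * r) := by
      rw [key, hΦ]
      simp [inner_smul_left, inner_smul_right, Complex.conj_I, Complex.I_sq, hr]
      ring_nf
      rw [Complex.I_sq]
      ring
    have hre : 0 ≤ r.re := by simpa [hr] using inner_self_nonneg (𝕜 := ℂ) (x := Φ X w)
    have him : r.im = 0 := by
      have := inner_self_im (𝕜 := ℂ) (Φ X w)
      simpa [Complex.ext_iff, RCLike.im, hr] using this
    have : ((Complex.I)⁻¹ * ((1 / 4 : ℂ) * (η X X + Complex.I * η X (J X)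
            - Complex.I * η (J X) X + η (J X) (J X)))) = r := by
      rw [h1, h2, h3, h4]
      field_simp
      ring_nf
    rw [this]
    exact ⟨hre, him⟩
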